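/- Let R be a commutative ring and S a multiplicative subset of R. If F is a u-S-flat R-module, then the localization F_S is a flat module over the localization R_S. -/

import Mathlib

universe u v

/-- An `R`-module `T` is `u`-`S`-torsion if there exists `s ∈ S` with `s • T = 0`. -/
def IsUSTorsion {R : Type u} [CommRing R] (S : Submonoid R)
    (M : Type v) [AddCommGroup M] [Module R M] : Prop :=
  ∃ s ∈ S, ∀ m : M, s • m = 0

/-- A sequence `A →f B →g C` of `R`-modules is `u`-`S`-exact at `B` if there is `s ∈ S`
with `s • ker g ⊆ im f` and `s • im f ⊆ ker g`. -/
def IsUSExactAt {R : Type u} [CommRing R] (S : Submonoid R)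
    {A B C : Type*} [AddCommGroup A] [AddCommGroup B] [AddCommGroup C]
    [Module R A] [Module R B] [Module R C]
    (f : A →ₗ[R] B) (g : B →ₗ[R] C) : Prop :=
  ∃ s ∈ S, (∀ b ∈ LinearMap.ker g, s • b ∈ LinearMap.range f) ∧
    (∀ b ∈ LinearMap.range f, s • b ∈ LinearMap.ker g)

/-- `0 → A →f B →g C → 0` is a `u`-`S`-exact sequence: `ker f` and `coker g` are
`u`-`S`-torsion and the sequence is `u`-`S`-exact at `B`. -/
def IsUSShortExact {R : Type u} [CommRing R] (S : Submonoid R)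
    {A B C : Type*} [AddCommGroup A] [AddCommGroup B] [AddCommGroup C]
    [Module R A] [Module R B] [Module R C]
    (f : A →ₗ[R] B) (g : B →ₗ[R] C) : Prop :=
  (∃ s ∈ S, ∀ a ∈ LinearMap.ker f, s • a = 0) ∧
    (∃ s ∈ S, ∀ c : C, s • c ∈ LinearMap.range g) ∧
    IsUSExactAt S f g

/-- An `R`-module `F` is `u`-`S`-flat if for every `u`-`S`-exact sequence
`0 → A → B → C → 0` the induced sequence `0 → A ⊗ F → B ⊗ F → C ⊗ F → 0` is
`u`-`S`-exact. -/
def IsUSFlat {R : Type u} [CommRing R] (S : Submonoid R)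
    (F : Type v) [AddCommGroup F] [Module R F] : Prop :=
  ∀ (A B C : Type v) [AddCommGroup A] [AddCommGroup B] [AddCommGroup C]
    [Module R A] [Module R B] [Module R C]
    (f : A →ₗ[R] B) (g : B →ₗ[R] C),
    IsUSShortExact S f g →
    IsUSShortExact S (LinearMap.rTensor F f) (LinearMap.rTensor F g)



section Aux

variable {R : Type u} [CommRing R] (S : Submonoid R)

open LinearMap TensorProduct

/-- For `s ∈ S`, scalar multiplication by `s` on `LocalizedModule S F` is an equivalence. -/
noncomputable def smulEquivAux (F : Type u) [AddCommGroup F] [Module R F]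
    {s : R} (hs : s ∈ S) : LocalizedModule S F ≃ₗ[R] LocalizedModule S F := by
  have hu : IsUnit (algebraMap R (Localization S) s) :=
    IsLocalization.map_units (Localization S) ⟨s, hs⟩
  refine
  { toFun := fun x => s • x
    invFun := fun x => hu.unit⁻¹.1 • x
    map_add' := fun x y => smul_add _ _ _
    map_smul' := fun r x => smul_comm _ _ _
    left_inv := fun x => ?_
    right_inv := fun x => ?_ }
  · show hu.unit⁻¹.1 • s • x = x
    rw [show s • x = (algebraMap R (Localization S) s) • x from
      (algebraMap_smul (Localization S) s x).symm, ← smul_assoc]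
    simp
  · show s • hu.unit⁻¹.1 • x = x
    rw [show s • (hu.unit⁻¹.1 • x) = (algebraMap R (Localization S) s) • hu.unit⁻¹.1 • x from
      (algebraMap_smul (Localization S) s _).symm, ← smul_assoc]
    simp

lemma smulEquivAux_apply (F : Type u) [AddCommGroup F] [Module R F]
    {s : R} (hs : s ∈ S) (x : LocalizedModule S F) : smulEquivAux S F hs x = s • x := rfl

end Aux

open scoped TensorProduct in
theorem localization_flat_of_isUSFlat' {R : Type u} [CommRing R] (S : Submonoid R)
    (F : Type u) [AddCommGroup F] [Module R F] (hF : IsUSFlat S F) :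
    Module.Flat (Localization S) (LocalizedModule S F) := by
  classical
  have flatR : Module.Flat R (LocalizedModule S F) := by
    rw [Module.Flat.iff_rTensor_injective']
    intro I
    -- u-S-torsion of the kernel of `I ⊗ F → R ⊗ F`
    have hses : IsUSShortExact S (I.subtype) (I.mkQ) := by
      refine ⟨⟨1, S.one_mem, ?_⟩, ⟨1, S.one_mem, ?_⟩, 1, S.one_mem, ?_, ?_⟩
      · intro a ha
        rw [LinearMap.mem_ker] at ha
        rw [one_smul]
        exact Subtype.ext ha
      · intro c
        obtain ⟨b, rfl⟩ := I.mkQ_surjective c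
        exact ⟨b, by rw [one_smul]⟩
      · intro b hb
        rw [LinearMap.mem_ker, Submodule.mkQ_apply, Submodule.Quotient.mk_eq_zero] at hb
        exact ⟨⟨b, hb⟩, by rw [one_smul]; rfl⟩
      · rintro b ⟨a, rfl⟩
        rw [LinearMap.mem_ker, one_smul, Submodule.mkQ_apply, Submodule.Quotient.mk_eq_zero]
        exact a.2
    obtain ⟨⟨s', hs', hker⟩, -, -⟩ := hF I R (R ⧸ I) I.subtype I.mkQ hses
    -- now prove injectivity
    rw [injective_iff_map_eq_zero]
    intro x hx
    -- common denominator
    have hsur : ∀ x : (I : Type u) ⊗[R] (LocalizedModule S F), ∃ s ∈ S, ∃ y : (I : Type u) ⊗[R] F,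
        s • x = LinearMap.lTensor (I : Type u) (LocalizedModule.mkLinearMap S F) y := by
      intro x
      induction x with
      | zero => exact ⟨1, S.one_mem, 0, by simp⟩
      | tmul a v =>
        induction v using LocalizedModule.induction_on with
        | _ f t =>
          refine ⟨t, t.2, a ⊗ₜ[R] f, ?_⟩
          rw [TensorProduct.smul_tmul', TensorProduct.smul_tmul]
          rw [LinearMap.lTensor_tmul, LocalizedModule.mkLinearMap_apply]
          congr 1
          show (t : R) • LocalizedModule.mk f t = LocalizedModule.mk f 1
          rw [show (t : R) • LocalizedModule.mk f t = LocalizedModule.mk ((t : R) • f) t from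
            (LocalizedModule.smul'_mk _ _ _)]
          exact LocalizedModule.mk_cancel t f
      | add x₁ x₂ ih₁ ih₂ =>
        obtain ⟨s₁, hs₁, y₁, hy₁⟩ := ih₁
        obtain ⟨s₂, hs₂, y₂, hy₂⟩ := ih₂
        refine ⟨s₁ * s₂, S.mul_mem hs₁ hs₂, s₂ • y₁ + s₁ • y₂, ?_⟩
        rw [map_add, map_smul, map_smul, ← hy₁, ← hy₂, smul_add]
        rw [mul_comm, mul_smul, mul_smul, smul_comm s₁ s₂]
    obtain ⟨s, hs, y, hy⟩ := hsur x
    -- naturality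
    have hnat : (LinearMap.rTensor (LocalizedModule S F) I.subtype)
        (LinearMap.lTensor (I : Type u) (LocalizedModule.mkLinearMap S F) y) =
        (LinearMap.lTensor R (LocalizedModule.mkLinearMap S F))
          (LinearMap.rTensor F I.subtype y) := by
      rw [← LinearMap.comp_apply, ← LinearMap.comp_apply,
        LinearMap.lTensor_comp_rTensor, LinearMap.rTensor_comp_lTensor]
    have h0 : (LinearMap.lTensor R (LocalizedModule.mkLinearMap S F))
        (LinearMap.rTensor F I.subtype y) = 0 := by
      rw [← hnat, ← hy, map_smul, hx, smul_zero]
    -- transport along lid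
    set z := LinearMap.rTensor F I.subtype y with hz
    have hlid : ∀ w : R ⊗[R] F, (TensorProduct.lid R (LocalizedModule S F))
        ((LinearMap.lTensor R (LocalizedModule.mkLinearMap S F)) w) =
        LocalizedModule.mkLinearMap S F ((TensorProduct.lid R F) w) := by
      intro w
      induction w with
      | zero => simp
      | tmul r f => simp
      | add w₁ w₂ ih₁ ih₂ => simp only [map_add, ih₁, ih₂]
    have hmk0 : LocalizedModule.mkLinearMap S F ((TensorProduct.lid R F) z) = 0 := by
      rw [← hlid, h0, map_zero]
    -- torsion
    have : LocalizedModule.mk ((TensorProduct.lid R F) z) (1 : S) = 0 := hmk0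
    rw [show (0 : (LocalizedModule S F)) = LocalizedModule.mk (0 : F) (1 : S) from (LocalizedModule.zero_mk 1).symm,
      LocalizedModule.mk_eq] at this
    obtain ⟨t, ht⟩ := this
    simp only [one_smul, smul_zero, Submonoid.smul_def] at ht
    have htz : (t : R) • z = 0 := by
      apply (TensorProduct.lid R F).injective
      rw [map_smul, map_zero, ht]
    have hty : (t : R) • y ∈ LinearMap.ker (LinearMap.rTensor F I.subtype) := by
      rw [LinearMap.mem_ker, map_smul, ← hz, htz]
    have hkill : s' • ((t : R) • y) = 0 := hker _ hty
    -- conclude s' * t * s • x = 0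
    have hx0 : (s' * (t : R) * s) • x = 0 := by
      rw [mul_smul, mul_smul, hy, ← map_smul, ← map_smul, hkill, map_zero]
    have hmem : s' * (t : R) * s ∈ S := S.mul_mem (S.mul_mem hs' t.2) hs
    have hlt : ∀ w : (I : Type u) ⊗[R] (LocalizedModule S F),
        (LinearEquiv.lTensor (I : Type u) (smulEquivAux S F hmem)) w
          = (s' * (t : R) * s) • w := by
      intro w
      show (LinearMap.lTensor (I : Type u) (smulEquivAux S F hmem).toLinearMap) w
        = (s' * (t : R) * s) • w
      rw [show (smulEquivAux S F hmem).toLinearMap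
        = DistribSMul.toLinearMap R (LocalizedModule S F) (s' * (t : R) * s) from LinearMap.ext fun _ => rfl,
        LinearMap.lTensor_smul_action]
      rfl
    have := (LinearEquiv.lTensor (I : Type u) (smulEquivAux S F hmem)).injective
      (a₁ := x) (a₂ := 0) (by rw [hlt, map_zero, hx0])
    exact this
  have : IsLocalizedModule S (LinearMap.id : (LocalizedModule S F) →ₗ[R] (LocalizedModule S F)) :=
    isLocalizedModule_id S (LocalizedModule S F) (Localization S)
  exact Module.Flat.of_isLocalizedModule (Localization S) S (LinearMap.id : (LocalizedModule S F) →ₗ[R] (LocalizedModule S F))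


/-- If `F` is a `u`-`S`-flat `R`-module, then the localization `F_S` is a flat
module over `R_S`. -/
theorem localization_flat_of_isUSFlat {R : Type u} [CommRing R] (S : Submonoid R)
    (F : Type u) [AddCommGroup F] [Module R F] (hF : IsUSFlat S F) :
    Module.Flat (Localization S) (LocalizedModule S F) := by
  exact localization_flat_of_isUSFlat' S F hF
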